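/- Let H and V be finite-dimensional real inner product spaces, A : H → H self-adjoint positive definite, and Φ : V → H an injective linear map. Then Φᵀ ∘ A ∘ Φ : V → V is invertible, and its inverse equals Φ†_A ∘ A⁻¹ ∘ (Φ†_A)ᵀ, where Φ†_A is the pseudo-inverse of Φ relative to the A-inner product: Φ†_A(u) is the unique v ∈ V minimizing ‖u − Φ(v)‖_A, and Φ†_A ∘ Φ = id. -/

import Mathlib

/-- For `A : H → H` self-adjoint positive definite and `Φ : V → H`
injective linear between finite-dimensional real inner product spaces,
`Φᵀ ∘ A ∘ Φ` is invertible with inverse `Φ†_A ∘ A⁻¹ ∘ (Φ†_A)ᵀ`, where `Φ†_A` is the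
pseudo-inverse of `Φ` relative to the `A`-inner product: `Φ†_A Φ = id` and `Φ†_A u`
minimizes `‖u − Φ v‖_A` over `v`. -/
theorem stmt6
    {H V : Type*} [NormedAddCommGroup H] [InnerProductSpace ℝ H]
    [FiniteDimensional ℝ H] [NormedAddCommGroup V] [InnerProductSpace ℝ V]
    [FiniteDimensional ℝ V]
    (A : H →ₗ[ℝ] H)
    (hAsa : LinearMap.adjoint A = A)
    (hApos : ∀ u : H, u ≠ 0 → (0 : ℝ) < inner ℝ (A u) u)
    (Ainv : H →ₗ[ℝ] H)
    (hA1 : A ∘ₗ Ainv = LinearMap.id) (hA2 : Ainv ∘ₗ A = LinearMap.id)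
    (Φ : V →ₗ[ℝ] H) (hΦ : Function.Injective Φ)
    (Φd : H →ₗ[ℝ] V)
    (hLeft : ∀ u : V, Φd (Φ u) = u)
    (hMin : ∀ (u : H) (v : V),
      (inner ℝ (A (u - Φ (Φd u))) (u - Φ (Φd u)) : ℝ) ≤ inner ℝ (A (u - Φ v)) (u - Φ v)) :
    (LinearMap.adjoint Φ ∘ₗ A ∘ₗ Φ) ∘ₗ
        (Φd ∘ₗ Ainv ∘ₗ LinearMap.adjoint Φd) = LinearMap.id ∧
    (Φd ∘ₗ Ainv ∘ₗ LinearMap.adjoint Φd) ∘ₗ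
        (LinearMap.adjoint Φ ∘ₗ A ∘ₗ Φ) = LinearMap.id := by
  -- self-adjointness of A as an inner product identity
  have hAsym : ∀ x y : H, (inner ℝ (A x) y : ℝ) = inner ℝ x (A y) := by
    intro x y
    nth_rewrite 1 [← hAsa]
    rw [LinearMap.adjoint_inner_left]
  -- key orthogonality
  have key : ∀ (u : H) (v : V), (inner ℝ (A (u - Φ (Φd u))) (Φ v) : ℝ) = 0 := by
    intro u v
    set e := u - Φ (Φd u) with he
    by_cases hv : Φ v = 0
    · rw [hv, inner_zero_right]
    · set c : ℝ := inner ℝ (A e) (Φ v) with hc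
      set d : ℝ := inner ℝ (A (Φ v)) (Φ v) with hd
      have hdpos : 0 < d := hApos _ hv
      have hmin := hMin u (Φd u + (c / d) • v)
      have hrw : u - Φ (Φd u + (c / d) • v) = e - (c / d) • Φ v := by
        rw [he]; rw [map_add, map_smul]; abel
      rw [hrw, ← he] at hmin
      have h1 : (inner ℝ (A (Φ v)) e : ℝ) = c := by
        rw [hc, hAsym, real_inner_comm]
      have hexp : (inner ℝ (A (e - (c / d) • Φ v)) (e - (c / d) • Φ v) : ℝ)
          = inner ℝ (A e) e - 2 * (c / d) * c + (c / d) ^ 2 * d := by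
        simp only [map_sub, map_smul, inner_sub_left, inner_sub_right,
          real_inner_smul_left, real_inner_smul_right, LinearMap.map_smul_of_tower, h1,
          ← hc, ← hd]
        ring
      rw [hexp] at hmin
      have hkey2 : (c / d) ^ 2 * d - 2 * (c / d) * c = -(c ^ 2 / d) := by
        field_simp; ring
      have hle : c ^ 2 / d ≤ 0 := by linarith
      have hsq : c ^ 2 ≤ 0 := by
        by_contra hpos
        push_neg at hpos
        have := div_pos hpos hdpos
        linarith
      have hc0 : c ^ 2 = 0 := le_antisymm hsq (sq_nonneg c)
      exact (pow_eq_zero_iff two_ne_zero).mp hc0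
  -- M ∘ Φd = Φᵀ ∘ A
  set M : V →ₗ[ℝ] V := LinearMap.adjoint Φ ∘ₗ A ∘ₗ Φ with hM
  have hL : M ∘ₗ Φd = LinearMap.adjoint Φ ∘ₗ A := by
    ext u
    apply ext_inner_right ℝ
    intro v
    simp only [LinearMap.comp_apply, hM, LinearMap.adjoint_inner_left]
    have := key u v
    rw [map_sub, inner_sub_left] at this
    linarith
  have hΦdΦ : Φd ∘ₗ Φ = LinearMap.id := by ext u; exact hLeft u
  have hMsa : LinearMap.adjoint M = M := by
    rw [hM, LinearMap.adjoint_comp, LinearMap.adjoint_comp, LinearMap.adjoint_adjoint, hAsa,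
      LinearMap.comp_assoc]
  have hR : LinearMap.adjoint Φd ∘ₗ M = A ∘ₗ Φ := by
    have h := congrArg LinearMap.adjoint hL
    rw [LinearMap.adjoint_comp, hMsa, LinearMap.adjoint_comp, LinearMap.adjoint_adjoint,
      hAsa] at h
    rw [h]
  have hL' : ∀ x : H, M (Φd x) = LinearMap.adjoint Φ (A x) := fun x =>
    LinearMap.ext_iff.mp hL x
  have hR' : ∀ w : V, LinearMap.adjoint Φd (M w) = A (Φ w) := fun w =>
    LinearMap.ext_iff.mp hR w
  have hA1' : ∀ x : H, A (Ainv x) = x := fun x => LinearMap.ext_iff.mp hA1 x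
  have hA2' : ∀ x : H, Ainv (A x) = x := fun x => LinearMap.ext_iff.mp hA2 x
  have hadj : ∀ u : V, LinearMap.adjoint Φ (LinearMap.adjoint Φd u) = u := by
    intro u
    rw [← LinearMap.comp_apply, ← LinearMap.adjoint_comp, hΦdΦ]
    apply ext_inner_right ℝ
    intro y
    rw [LinearMap.adjoint_inner_left]
    simp
  constructor
  · ext u
    simp only [LinearMap.comp_apply, LinearMap.id_apply, LinearMap.id_coe, id_eq]
    rw [hL', hA1', hadj]
  · ext u
    simp only [LinearMap.comp_apply, LinearMap.id_apply, LinearMap.id_coe, id_eq]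
    rw [hR', hA2', hLeft]
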